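/- Let V be a commutative ring, m ⊆ V an ideal satisfying m·m = m, R a commutative V-algebra, and M an almost finitely generated R-module. Consider the conditions: (i) M is almost projective; (ii) for every ε ∈ m there exist n ∈ ℕ and R-linear maps u : M → R^n and v : R^n → M with v ∘ u = ε·id_M; (iii) M is almost flat. Then (i) and (ii) are equivalent, and each implies (iii). -/

import Mathlib

universe u v

open CategoryTheory

/-- An `R`-module `M` (for `R` a `V`-algebra) is almost projective (w.r.t. an ideal
`m ⊆ V`) if `m·Ext^i_R(M, N) = 0` for every `R`-module `N` and every `i > 0`. -/
def IsAlmostProjective (V : Type v) [CommRing V] (m : Ideal V)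
    (R : Type u) [CommRing R] [Algebra V R]
    (M : Type u) [AddCommGroup M] [Module R M] : Prop :=
  ∀ i : ℕ, 0 < i → ∀ N : ModuleCat.{u} R, ∀ a ∈ m,
    ∀ x : ((Ext R (ModuleCat.{u} R) i).obj (Opposite.op (ModuleCat.of R M))).obj N,
      algebraMap V R a • x = 0

/-- An `R`-module `M` (for `R` a `V`-algebra) is almost flat (w.r.t. an ideal `m ⊆ V`)
if `m·Tor_1^R(M, N) = 0` for every `R`-module `N`. -/
def IsAlmostFlat (V : Type v) [CommRing V] (m : Ideal V)
    (R : Type u) [CommRing R] [Algebra V R]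
    (M : Type u) [AddCommGroup M] [Module R M] : Prop :=
  ∀ N : ModuleCat.{u} R, ∀ a ∈ m,
    ∀ x : ((Tor (ModuleCat.{u} R) 1).obj (ModuleCat.of R M)).obj N,
      algebraMap V R a • x = 0

/-- An `R`-module `M` (for `R` a `V`-algebra) is almost finitely generated (w.r.t. an
ideal `m ⊆ V`) if for every `ε ∈ m` there is a finitely generated submodule `M_ε ⊆ M`
with `ε·M ⊆ M_ε`. -/
def IsAlmostFG (V : Type v) [CommRing V] (m : Ideal V)
    (R : Type u) [CommRing R] [Algebra V R]
    (M : Type u) [AddCommGroup M] [Module R M] : Prop :=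
  ∀ ε ∈ m, ∃ M₀ : Submodule R M, M₀.FG ∧ ∀ x : M, algebraMap V R ε • x ∈ M₀


section AuxLemmas

open CategoryTheory Limits MonoidalCategory

private lemma homology_killed_iff {R : Type u} [CommRing R] {ι : Type*} {cc : ComplexShape ι}
    (K : HomologicalComplex (ModuleCat.{u} R) cc) (i j k : ι)
    (hi : cc.prev j = i) (hk : cc.next j = k)
    (T : ModuleCat.{u} R) (e : T ≅ K.homology j) (r : R) :
    (∀ x : T, r • x = 0) ↔
      (∀ z : K.X j, K.d j k z = 0 → ∃ y : K.X i, K.d i j y = r • z) := by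
  set S := K.sc' i j k with hS
  have hfst : S.f = K.d i j := rfl
  have hsnd : S.g = K.d j k := rfl
  let E : T ≅ S.moduleCatLeftHomologyData.H := e ≪≫ K.homologyIsoSc' i j k hi hk ≪≫ S.moduleCatHomologyIso
  let e' : T ≃ₗ[R] (LinearMap.ker S.g.hom ⧸ LinearMap.range S.moduleCatToCycles) := E.toLinearEquiv
  constructor
  · intro h z hz
    have hz' : z ∈ LinearMap.ker S.g.hom := hz
    have h0 : r • (Submodule.Quotient.mk (⟨z, hz'⟩ : LinearMap.ker S.g.hom) :
        (LinearMap.ker S.g.hom ⧸ LinearMap.range S.moduleCatToCycles)) = 0 := by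
      have := h (e'.symm (Submodule.Quotient.mk ⟨z, hz'⟩))
      have := congrArg e' this
      rw [map_smul, e'.apply_symm_apply, map_zero] at this
      exact this
    rw [← Submodule.Quotient.mk_smul, Submodule.Quotient.mk_eq_zero] at h0
    obtain ⟨y, hy⟩ := h0
    refine ⟨y, ?_⟩
    have := congrArg (Subtype.val) hy
    exact this
  · intro h x
    obtain ⟨w, hw⟩ := Submodule.Quotient.mk_surjective _ (e' x)
    obtain ⟨y, hy⟩ := h w.1 w.2
    apply e'.injective
    rw [map_smul, map_zero, hw.symm]
    rw [← Submodule.Quotient.mk_smul, Submodule.Quotient.mk_eq_zero]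
    exact ⟨y, Subtype.ext hy⟩

private lemma split_implies_flat (V : Type v) [CommRing V] (m : Ideal V)
    (R : Type u) [CommRing R] [Algebra V R]
    (M : Type u) [AddCommGroup M] [Module R M]
    (h : ∀ ε ∈ m, ∃ (n : ℕ) (u : M →ₗ[R] (Fin n → R)) (v : (Fin n → R) →ₗ[R] M),
        v.comp u = algebraMap V R ε • (LinearMap.id : M →ₗ[R] M)) :
    ∀ N : ModuleCat.{u} R, ∀ a ∈ m,
      ∀ x : ((Tor (ModuleCat.{u} R) 1).obj (ModuleCat.of R M)).obj N,
        algebraMap V R a • x = 0 := by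
  intro N a ha x
  obtain ⟨n, u, v, huv⟩ := h a ha
  let r : R := algebraMap V R a
  let X : ModuleCat.{u} R := ModuleCat.of R M
  let Fn : ModuleCat.{u} R := ModuleCat.of R (Fin n → R)
  haveI : Module.Flat R Fn := (inferInstance : Module.Flat R (Fin n → R))
  let U : X ⟶ Fn := ModuleCat.ofHom u
  let Vm : Fn ⟶ X := ModuleCat.ofHom v
  have hUV : U ≫ Vm = r • 𝟙 X := ModuleCat.hom_ext huv
  let Q : ProjectiveResolution N := (HasProjectiveResolution.out).some
  let F := (MonoidalCategory.tensoringLeft (ModuleCat.{u} R)).obj X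
  let K := (F.mapHomologicalComplex (ComplexShape.down ℕ)).obj Q.complex
  have e : ((Tor (ModuleCat.{u} R) 1).obj X).obj N ≅ K.homology 1 :=
    Q.isoLeftDerivedObj F 1
  have main : ∀ z : K.X 1, K.d 1 0 z = 0 → ∃ y : K.X 2, K.d 2 1 y = r • z := by
    intro z hz
    have hzz : (X ◁ Q.complex.d 1 0) z = 0 := hz
    have hz' : (Fn ◁ Q.complex.d 1 0) ((U ▷ Q.complex.X 1) z) = 0 := by
      have h1 : (Fn ◁ Q.complex.d 1 0) ((U ▷ Q.complex.X 1) z)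
          = (U ▷ Q.complex.X 0) ((X ◁ Q.complex.d 1 0) z) :=
        ConcreteCategory.congr_hom (MonoidalCategory.whisker_exchange U (Q.complex.d 1 0)).symm z
      rw [h1, hzz, map_zero]
    have hexact : (ShortComplex.mk (Q.complex.d 2 1) (Q.complex.d 1 0)
        (Q.complex.d_comp_d 2 1 0)).Exact := Q.exact_succ 0
    have hex2 := Module.Flat.lTensor_shortComplex_exact Fn _ hexact
    rw [ShortComplex.moduleCat_exact_iff] at hex2
    obtain ⟨y', hy'⟩ := hex2 ((U ▷ Q.complex.X 1) z) hz'
    refine ⟨(Vm ▷ Q.complex.X 2) y', ?_⟩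
    have hy'' : (Fn ◁ Q.complex.d 2 1) y' = (U ▷ Q.complex.X 1) z := hy'
    have h2 : (X ◁ Q.complex.d 2 1) ((Vm ▷ Q.complex.X 2) y')
        = (Vm ▷ Q.complex.X 1) ((Fn ◁ Q.complex.d 2 1) y') :=
      (ConcreteCategory.congr_hom (MonoidalCategory.whisker_exchange Vm (Q.complex.d 2 1)) y').symm
    have h4 : (Vm ▷ Q.complex.X 1) ((U ▷ Q.complex.X 1) z)
        = (((U ≫ Vm) ▷ Q.complex.X 1)) z :=
      (ConcreteCategory.congr_hom (MonoidalCategory.comp_whiskerRight U Vm (Q.complex.X 1)) z).symm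
    have h3 : (U ≫ Vm) ▷ Q.complex.X 1 = r • 𝟙 (X ⊗ Q.complex.X 1) := by
      rw [hUV, MonoidalLinear.smul_whiskerRight, MonoidalCategory.id_whiskerRight]
    show (X ◁ Q.complex.d 2 1) ((Vm ▷ Q.complex.X 2) y') = r • z
    rw [h2, hy'', h4, h3]
    rfl
  exact (homology_killed_iff K 2 1 0 (ComplexShape.prev_eq' _ (by simp))
    (ComplexShape.next_eq' _ (by simp)) _ e r).mpr main x

private lemma split_to_proj (V : Type v) [CommRing V] (m : Ideal V)
    (R : Type u) [CommRing R] [Algebra V R]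
    (M : Type u) [AddCommGroup M] [Module R M]
    (h : ∀ ε ∈ m, ∃ (n : ℕ) (u : M →ₗ[R] (Fin n → R)) (v : (Fin n → R) →ₗ[R] M),
        v.comp u = algebraMap V R ε • (LinearMap.id : M →ₗ[R] M)) :
    ∀ i : ℕ, 0 < i → ∀ N : ModuleCat.{u} R, ∀ a ∈ m,
      ∀ x : ((Ext R (ModuleCat.{u} R) i).obj (Opposite.op (ModuleCat.of R M))).obj N,
        algebraMap V R a • x = 0 := by
  intro i hi N a ha
  obtain ⟨k, rfl⟩ : ∃ k, i = k + 1 := ⟨i - 1, by omega⟩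
  intro x
  obtain ⟨n, u, v, huv⟩ := h a ha
  let r : R := algebraMap V R a
  let X : ModuleCat.{u} R := ModuleCat.of R M
  let Fn : ModuleCat.{u} R := ModuleCat.of R (Fin n → R)
  haveI : Projective Fn := ModuleCat.projective_of_free (Pi.basisFun R (Fin n))
  let U : X ⟶ Fn := ModuleCat.ofHom u
  let Vm : Fn ⟶ X := ModuleCat.ofHom v
  have hUV : U ≫ Vm = r • 𝟙 X := ModuleCat.hom_ext huv
  let P : ProjectiveResolution X := (HasProjectiveResolution.out).some
  let Q : ProjectiveResolution Fn := ProjectiveResolution.self Fn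
  let G : P.complex ⟶ P.complex :=
    ProjectiveResolution.lift U P Q ≫ ProjectiveResolution.lift Vm Q P
  have hG1 : G ≫ P.π = P.π ≫ (ChainComplex.single₀ (ModuleCat.{u} R)).map (r • 𝟙 X) := by
    show ProjectiveResolution.lift U P Q ≫ ProjectiveResolution.lift Vm Q P ≫ P.π = _
    rw [ProjectiveResolution.lift_commutes, ← Category.assoc,
      ProjectiveResolution.lift_commutes, Category.assoc, ← Functor.map_comp, hUV]
  have hG2 : (r • 𝟙 P.complex) ≫ P.π
      = P.π ≫ (ChainComplex.single₀ (ModuleCat.{u} R)).map (r • 𝟙 X) := by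
    apply HomologicalComplex.hom_ext
    intro j
    match j with
    | 0 =>
      simp only [HomologicalComplex.comp_f, HomologicalComplex.smul_f_apply,
        HomologicalComplex.id_f, ChainComplex.single₀_map_f_zero,
        Linear.smul_comp, Linear.comp_smul, Category.id_comp, Category.comp_id]
      ext x; rfl
    | (j+1) =>
      have h1 : P.π.f (j+1) = 0 := ProjectiveResolution.π_f_succ P j
      simp only [HomologicalComplex.comp_f, h1, comp_zero, zero_comp]
  let H : Homotopy G (r • 𝟙 P.complex) :=
    ProjectiveResolution.liftHomotopy (r • 𝟙 X) _ _ hG1 hG2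
  have hcomm := H.comm (k+1)
  rw [dNext_eq H.hom (show (ComplexShape.down ℕ).Rel (k+1) k by simp),
      prevD_eq H.hom (show (ComplexShape.down ℕ).Rel (k+2) (k+1) by simp)] at hcomm
  have hGf : G.f (k+1) = 0 := by
    have h0 : (ProjectiveResolution.lift U P Q).f (k+1) = 0 :=
      (HomologicalComplex.isZero_single_obj_X (ComplexShape.down ℕ) 0 Fn (k+1)
        (by simp)).eq_of_tgt _ _
    show (ProjectiveResolution.lift U P Q).f (k+1)
        ≫ (ProjectiveResolution.lift Vm Q P).f (k+1) = 0
    rw [h0, zero_comp]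
  rw [hGf] at hcomm
  -- hcomm : 0 = P.d (k+1) k ≫ H.hom k (k+1) + H.hom (k+1) (k+2) ≫ P.d (k+2) (k+1) + r • 𝟙
  have hkey : r • (𝟙 (P.complex.X (k+1)))
      = -(P.complex.d (k+1) k ≫ H.hom k (k+1))
        - H.hom (k+1) (k+2) ≫ P.complex.d (k+2) (k+1) := by
    have := hcomm.symm
    simp only [HomologicalComplex.smul_f_apply, HomologicalComplex.id_f] at this
    linear_combination (norm := abel) this
  let K := P.complex.linearYonedaObj R N
  have e : ((Ext R (ModuleCat.{u} R) (k+1)).obj (Opposite.op X)).obj N ≅ K.homology (k+1) :=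
    P.isoExt (k+1) N
  have main : ∀ z : K.X (k+1), K.d (k+1) (k+2) z = 0
      → ∃ y : K.X k, K.d k (k+1) y = r • z := by
    intro z hz
    change P.complex.X (k+1) ⟶ N at z
    have hz' : P.complex.d (k+2) (k+1) ≫ z = 0 := hz
    refine ⟨-(H.hom k (k+1) ≫ z), ?_⟩
    show P.complex.d (k+1) k ≫ (-(H.hom k (k+1) ≫ z)) = r • z
    have : r • z = (r • 𝟙 (P.complex.X (k+1))) ≫ z := by
      rw [Linear.smul_comp, Category.id_comp]
    rw [this, hkey]
    simp only [Preadditive.sub_comp, Preadditive.neg_comp, Category.assoc, hz',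
      comp_zero, sub_zero, Preadditive.comp_neg]
  exact (homology_killed_iff K k (k+1) (k+2)
    (ComplexShape.prev_eq' _ (by simp)) (ComplexShape.next_eq' _ (by simp)) _ e r).mpr main x

private lemma proj_to_split (V : Type v) [CommRing V] (m : Ideal V) (hm : m * m = m)
    (R : Type u) [CommRing R] [Algebra V R]
    (M : Type u) [AddCommGroup M] [Module R M]
    (hfg : ∀ ε ∈ m, ∃ M₀ : Submodule R M, M₀.FG ∧ ∀ x : M, algebraMap V R ε • x ∈ M₀)
    (hp : ∀ i : ℕ, 0 < i → ∀ N : ModuleCat.{u} R, ∀ a ∈ m,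
      ∀ x : ((Ext R (ModuleCat.{u} R) i).obj (Opposite.op (ModuleCat.of R M))).obj N,
        algebraMap V R a • x = 0) :
    ∀ ε ∈ m, ∃ (n : ℕ) (u : M →ₗ[R] (Fin n → R)) (v : (Fin n → R) →ₗ[R] M),
      v.comp u = algebraMap V R ε • (LinearMap.id : M →ₗ[R] M) := by
  have key : ∀ a ∈ m, ∀ b ∈ m, ∃ (n : ℕ) (u : M →ₗ[R] (Fin n → R)) (v : (Fin n → R) →ₗ[R] M),
      v.comp u = algebraMap V R (a * b) • (LinearMap.id : M →ₗ[R] M) := by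
    intro a ha b hb
    obtain ⟨M₀, hM₀fg, hbM⟩ := hfg b hb
    obtain ⟨s, hs⟩ := hM₀fg
    classical
    let n := s.card
    let g : Fin n → M := fun i => (s.equivFin.symm i : M)
    let φ : (Fin n → R) →ₗ[R] M := Fintype.linearCombination R g
    have hφsingle : ∀ i : Fin n, φ (Pi.single i 1) = g i := by
      intro i
      simp [φ, Fintype.linearCombination_apply, Pi.single_apply]
    have hrange : ∀ x : M, algebraMap V R b • x ∈ LinearMap.range φ := by
      intro x
      have hx := hbM x
      rw [← hs] at hx
      refine Submodule.span_le.mpr ?_ hx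
      intro y hy
      obtain ⟨i, hi⟩ : ∃ i : Fin n, g i = y := ⟨s.equivFin ⟨y, hy⟩, by simp [g]⟩
      exact ⟨Pi.single i 1, by rw [hφsingle, hi]⟩
    -- categorical setup
    let ra : R := algebraMap V R a
    let rb : R := algebraMap V R b
    let X : ModuleCat.{u} R := ModuleCat.of R M
    let Fn : ModuleCat.{u} R := ModuleCat.of R (Fin n → R)
    let Φ : Fn ⟶ X := ModuleCat.ofHom φ
    let P : ProjectiveResolution X := (HasProjectiveResolution.out).some
    let π₀ : P.complex.X 0 ⟶ X := P.π.f 0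
    have hsurj : Function.Surjective π₀ := by
      have : Epi (P.π.f 0) := inferInstance
      exact (ModuleCat.epi_iff_surjective π₀).mp this
    -- lift b•π₀ through φ
    let M₀' : Submodule R M := LinearMap.range φ
    let β' : P.complex.X 0 ⟶ ModuleCat.of R M₀' :=
      ModuleCat.ofHom (LinearMap.codRestrict M₀' (rb • π₀.hom)
        (fun p => hrange (π₀ p)))
    let Φ' : Fn ⟶ ModuleCat.of R M₀' := ModuleCat.ofHom φ.rangeRestrict
    haveI : Epi Φ' := (ModuleCat.epi_iff_surjective Φ').mpr
      (LinearMap.surjective_rangeRestrict φ)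
    let g0 : P.complex.X 0 ⟶ Fn := Projective.factorThru β' Φ'
    have hg0 : ∀ p : P.complex.X 0, φ (g0 p) = rb • π₀ p := by
      intro p
      have h1 : (g0 ≫ Φ') p = β' p := ConcreteCategory.congr_hom (Projective.factorThru_comp β' Φ') p
      have h2 := congrArg Subtype.val h1
      exact h2
    -- the cocycle
    let K' : ModuleCat.{u} R := ModuleCat.of R (LinearMap.ker φ)
    have hd₁π : ∀ w : P.complex.X 1, π₀ (P.complex.d 1 0 w) = 0 := by
      intro w
      have := ConcreteCategory.congr_hom P.complex_d_comp_π_f_zero w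
      exact this
    let z : P.complex.X 1 ⟶ K' :=
      ModuleCat.ofHom <| LinearMap.codRestrict (LinearMap.ker φ)
        (g0.hom.comp (P.complex.d 1 0).hom)
        (fun w => by
          show φ (g0 (P.complex.d 1 0 w)) = 0
          rw [hg0, hd₁π, smul_zero])
    let K := P.complex.linearYonedaObj R K'
    have e : ((Ext R (ModuleCat.{u} R) 1).obj (Opposite.op X)).obj K' ≅ K.homology 1 :=
      P.isoExt 1 K'
    have hz : K.d 1 2 z = 0 := by
      show P.complex.d 2 1 ≫ z = 0
      apply ModuleCat.hom_ext
      apply LinearMap.ext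
      intro w
      apply Subtype.ext
      show g0 (P.complex.d 1 0 (P.complex.d 2 1 w)) = 0
      have : P.complex.d 1 0 (P.complex.d 2 1 w) = 0 := by
        have := ConcreteCategory.congr_hom (P.complex.d_comp_d 2 1 0) w
        exact this
      rw [this, map_zero]
    obtain ⟨y0, hy0⟩ := (homology_killed_iff K 0 1 2
      (ComplexShape.prev_eq' _ (by simp)) (ComplexShape.next_eq' _ (by simp)) _ e ra).mp
      (hp 1 one_pos K' a ha) z hz
    let y : P.complex.X 0 ⟶ K' := y0
    have hy : P.complex.d 1 0 ≫ y = ra • z := hy0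
    have hy' : ∀ w : P.complex.X 1, y (P.complex.d 1 0 w) = (ra • z) w :=
      fun w => ConcreteCategory.congr_hom hy w
    -- the map w
    let ι : K' ⟶ Fn := ModuleCat.ofHom (LinearMap.ker φ).subtype
    let w : P.complex.X 0 ⟶ Fn := ra • g0 - y ≫ ι
    have hwd : ∀ q : P.complex.X 1, w (P.complex.d 1 0 q) = 0 := by
      intro q
      show ra • g0 (P.complex.d 1 0 q) - ι (y (P.complex.d 1 0 q)) = 0
      rw [hy' q]
      have h5 : ι ((ra • z) q) = ra • (g0 (P.complex.d 1 0 q)) := rfl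
      rw [h5, sub_self]
    have hexact : ∀ p : P.complex.X 0, π₀ p = 0 → ∃ q : P.complex.X 1,
        P.complex.d 1 0 q = p := by
      intro p hp0
      have := P.exact₀
      rw [ShortComplex.moduleCat_exact_iff] at this
      exact this p hp0
    have hker : LinearMap.ker π₀.hom ≤
        LinearMap.ker w.hom := by
      intro p hp0
      obtain ⟨q, rfl⟩ := hexact p hp0
      exact hwd q
    let u : M →ₗ[R] (Fin n → R) :=
      (LinearMap.ker π₀.hom).liftQ w.hom hker ∘ₗ
        (LinearMap.quotKerEquivOfSurjective _ hsurj).symm.toLinearMap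
    have hu : ∀ p : P.complex.X 0, u (π₀ p) = w p := by
      intro p
      have hq : (LinearMap.quotKerEquivOfSurjective
          π₀.hom hsurj).symm (π₀ p) = Submodule.Quotient.mk p := by
        apply (LinearMap.quotKerEquivOfSurjective _ hsurj).injective
        rw [LinearEquiv.apply_symm_apply]
        rfl
      show (LinearMap.ker π₀.hom).liftQ w.hom hker
        ((LinearMap.quotKerEquivOfSurjective _ hsurj).symm (π₀ p)) = w p
      rw [hq]
      rfl
    refine ⟨n, u, φ, ?_⟩
    apply LinearMap.ext
    intro x
    obtain ⟨p, rfl⟩ := hsurj x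
    show φ (u (π₀ p)) = algebraMap V R (a * b) • (π₀ p)
    rw [hu p]
    show φ (ra • g0 p - ι (y p)) = _
    have hιy : φ (ι (y p)) = 0 := (y p).2
    rw [map_sub, map_smul, hιy, sub_zero, hg0, map_mul]
    rw [smul_smul]
  intro ε hε
  have hε2 : ε ∈ m * m := by rw [hm]; exact hε
  refine Submodule.mul_induction_on hε2 (fun a ha b hb => key a ha b hb) ?_
  rintro x y ⟨n₁, u₁, v₁, h₁⟩ ⟨n₂, u₂, v₂, h₂⟩
  let E : (Fin (n₁ + n₂) → R) ≃ₗ[R] (Fin n₁ → R) × (Fin n₂ → R) :=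
    (LinearEquiv.funCongrLeft R R finSumFinEquiv).trans
      (LinearEquiv.sumArrowLequivProdArrow _ _ R R)
  let v' : ((Fin n₁ → R) × (Fin n₂ → R)) →ₗ[R] M :=
    v₁ ∘ₗ LinearMap.fst R (Fin n₁ → R) (Fin n₂ → R) +
      v₂ ∘ₗ LinearMap.snd R (Fin n₁ → R) (Fin n₂ → R)
  refine ⟨n₁ + n₂, E.symm.toLinearMap ∘ₗ (u₁.prod u₂), v' ∘ₗ E.toLinearMap, ?_⟩
  apply LinearMap.ext
  intro x'
  have hE : E (E.symm (u₁ x', u₂ x')) = (u₁ x', u₂ x') := E.apply_symm_apply _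
  show v' (E (E.symm (u₁ x', u₂ x'))) = _
  rw [hE]
  have e₁ := DFunLike.congr_fun h₁ x'
  have e₂ := DFunLike.congr_fun h₂ x'
  simp only [LinearMap.coe_comp, Function.comp_apply, LinearMap.smul_apply,
    LinearMap.id_apply] at e₁ e₂ ⊢
  show v₁ (u₁ x') + v₂ (u₂ x') = algebraMap V R (x + y) • x'
  rw [e₁, e₂, map_add, add_smul]

end AuxLemmas

/-- Let `M` be an almost finitely generated `R`-module.  Consider:
(i) `M` is almost projective;
(ii) for every `ε ∈ m` there are `n ∈ ℕ` and maps `u : M → R^n`, `v : R^n → M` with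
`v ∘ u = ε·id_M`;
(iii) `M` is almost flat.
Then (i) ⇔ (ii), and each implies (iii). -/
theorem isAlmostProjective_iff_split_and_implies_flat
    (V : Type v) [CommRing V] (m : Ideal V) (hm : m * m = m)
    (R : Type u) [CommRing R] [Algebra V R]
    (M : Type u) [AddCommGroup M] [Module R M]
    (hfg : IsAlmostFG V m R M) :
    (IsAlmostProjective V m R M ↔
      ∀ ε ∈ m, ∃ (n : ℕ) (u : M →ₗ[R] (Fin n → R)) (v : (Fin n → R) →ₗ[R] M),
        v.comp u = algebraMap V R ε • (LinearMap.id : M →ₗ[R] M)) ∧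
    (IsAlmostProjective V m R M → IsAlmostFlat V m R M) ∧
    ((∀ ε ∈ m, ∃ (n : ℕ) (u : M →ₗ[R] (Fin n → R)) (v : (Fin n → R) →ₗ[R] M),
        v.comp u = algebraMap V R ε • (LinearMap.id : M →ₗ[R] M)) →
      IsAlmostFlat V m R M) := by
  refine ⟨⟨fun hp => proj_to_split V m hm R M hfg hp, fun hs => split_to_proj V m R M hs⟩,
    fun hp => split_implies_flat V m R M (proj_to_split V m hm R M hfg hp),
    fun hs => split_implies_flat V m R M hs⟩
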